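/- The Picard–Fuchs system of V_{(2,29)} is ℤ/2ℤ-equivariant under the coordinate swap: let σ(f)(z1,z2) = f(z2,z1) denote the swap of variables, and let P1 = δ1^3 + z1(δ1+δ2+1/3)(δ1+δ2+2/3)(δ1+δ2+1) and P2 = (δ1^2 − δ1δ2 + δ2^2) + (z1+z2)(δ1+δ2+1/3)(δ1+δ2+2/3). Then for every smooth function f of two variables: σ(P2(σ(f))) = P2(f), and σ(P1(σ(f))) = (δ1+δ2)(P2(f)) − P1(f). In particular the left ideal generated by P1 and P2 is invariant under the swap. -/

import Mathlib

/-- The logarithmic derivative `δ1 = z1 ∂/∂z1`. -/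
noncomputable def del1 (f : ℂ × ℂ → ℂ) : ℂ × ℂ → ℂ :=
  fun p => p.1 * fderiv ℂ f p (1, 0)

/-- The logarithmic derivative `δ2 = z2 ∂/∂z2`. -/
noncomputable def del2 (f : ℂ × ℂ → ℂ) : ℂ × ℂ → ℂ :=
  fun p => p.2 * fderiv ℂ f p (0, 1)

/-- The first-order operator `δ1 + δ2 + c`. -/
noncomputable def Lop (c : ℂ) (f : ℂ × ℂ → ℂ) : ℂ × ℂ → ℂ :=
  fun p => del1 f p + del2 f p + c * f p

/-- The first (rescaled) Picard-Fuchs operator of `V_{(2,29)}`: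
`P1 = δ1^3 + z1 (δ1+δ2+1/3)(δ1+δ2+2/3)(δ1+δ2+1)`. -/
noncomputable def P1op (f : ℂ × ℂ → ℂ) : ℂ × ℂ → ℂ :=
  fun p => del1 (del1 (del1 f)) p + p.1 * Lop (1/3) (Lop (2/3) (Lop 1 f)) p

/-- The second (rescaled) Picard-Fuchs operator of `V_{(2,29)}`:
`P2 = (δ1^2 - δ1 δ2 + δ2^2) + (z1+z2)(δ1+δ2+1/3)(δ1+δ2+2/3)`. -/
noncomputable def P2op (f : ℂ × ℂ → ℂ) : ℂ × ℂ → ℂ :=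
  fun p => (del1 (del1 f) p - del1 (del2 f) p + del2 (del2 f) p)
    + (p.1 + p.2) * Lop (1/3) (Lop (2/3) f) p

/-- The coordinate swap `σ(f)(z1,z2) = f(z2,z1)`. -/
def swapOp (f : ℂ × ℂ → ℂ) : ℂ × ℂ → ℂ := fun p => f (p.2, p.1)

/-! ### Auxiliary lemmas -/

lemma Lop_apply (c : ℂ) (f : ℂ × ℂ → ℂ) (p : ℂ × ℂ) :
    Lop c f p = del1 f p + del2 f p + c * f p := rfl

lemma contDiff_del1 {f : ℂ × ℂ → ℂ} (hf : ContDiff ℂ ⊤ f) : ContDiff ℂ ⊤ (del1 f) :=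
  contDiff_fst.mul ((hf.fderiv_right le_top).clm_apply contDiff_const)

lemma contDiff_del2 {f : ℂ × ℂ → ℂ} (hf : ContDiff ℂ ⊤ f) : ContDiff ℂ ⊤ (del2 f) :=
  contDiff_snd.mul ((hf.fderiv_right le_top).clm_apply contDiff_const)

lemma contDiff_Lop {f : ℂ × ℂ → ℂ} (c : ℂ) (hf : ContDiff ℂ ⊤ f) :
    ContDiff ℂ ⊤ (Lop c f) :=
  ((contDiff_del1 hf).add (contDiff_del2 hf)).add (contDiff_const.mul hf)

lemma del1_swap (f : ℂ × ℂ → ℂ) : del1 (swapOp f) = swapOp (del2 f) := by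
  funext p
  have h : swapOp f = f ∘ (ContinuousLinearEquiv.prodComm ℂ ℂ ℂ) := rfl
  simp [del1, del2, swapOp, h, ContinuousLinearEquiv.comp_right_fderiv, Prod.swap]

lemma del2_swap (f : ℂ × ℂ → ℂ) : del2 (swapOp f) = swapOp (del1 f) := by
  funext p
  have h : swapOp f = f ∘ (ContinuousLinearEquiv.prodComm ℂ ℂ ℂ) := rfl
  simp [del1, del2, swapOp, h, ContinuousLinearEquiv.comp_right_fderiv, Prod.swap]

lemma Lop_swap (c : ℂ) (f : ℂ × ℂ → ℂ) : Lop c (swapOp f) = swapOp (Lop c f) := by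
  funext p
  simp only [Lop, del1_swap, del2_swap, swapOp]
  ring

lemma del1_add {g h : ℂ × ℂ → ℂ} (hg : Differentiable ℂ g) (hh : Differentiable ℂ h) :
    del1 (fun p => g p + h p) = fun p => del1 g p + del1 h p := by
  funext p
  simp only [del1]
  rw [fderiv_fun_add (hg p) (hh p)]
  simp [mul_add]

lemma del2_add {g h : ℂ × ℂ → ℂ} (hg : Differentiable ℂ g) (hh : Differentiable ℂ h) :
    del2 (fun p => g p + h p) = fun p => del2 g p + del2 h p := by
  funext p
  simp only [del2]
  rw [fderiv_fun_add (hg p) (hh p)]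
  simp [mul_add]

lemma del1_sub {g h : ℂ × ℂ → ℂ} (hg : Differentiable ℂ g) (hh : Differentiable ℂ h) :
    del1 (fun p => g p - h p) = fun p => del1 g p - del1 h p := by
  funext p
  simp only [del1]
  rw [fderiv_fun_sub (hg p) (hh p)]
  simp [mul_sub]

lemma del2_sub {g h : ℂ × ℂ → ℂ} (hg : Differentiable ℂ g) (hh : Differentiable ℂ h) :
    del2 (fun p => g p - h p) = fun p => del2 g p - del2 h p := by
  funext p
  simp only [del2]
  rw [fderiv_fun_sub (hg p) (hh p)]
  simp [mul_sub]

lemma del1_cmul {g : ℂ × ℂ → ℂ} (hg : Differentiable ℂ g) (c : ℂ) :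
    del1 (fun p => c * g p) = fun p => c * del1 g p := by
  funext p
  simp only [del1]
  rw [fderiv_const_mul (hg p) c]
  simp
  ring

lemma del2_cmul {g : ℂ × ℂ → ℂ} (hg : Differentiable ℂ g) (c : ℂ) :
    del2 (fun p => c * g p) = fun p => c * del2 g p := by
  funext p
  simp only [del2]
  rw [fderiv_const_mul (hg p) c]
  simp
  ring

lemma fderiv_coordsum (p : ℂ × ℂ) :
    fderiv ℂ (fun q : ℂ × ℂ => q.1 + q.2) p
      = ContinuousLinearMap.fst ℂ ℂ ℂ + ContinuousLinearMap.snd ℂ ℂ ℂ := by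
  rw [show (fun q : ℂ × ℂ => q.1 + q.2) = (fun q : ℂ × ℂ => Prod.fst q + Prod.snd q) from rfl,
    fderiv_fun_add differentiableAt_fst differentiableAt_snd, fderiv_fst, fderiv_snd]

lemma del1_coordmul {g : ℂ × ℂ → ℂ} (hg : Differentiable ℂ g) :
    del1 (fun p => (p.1 + p.2) * g p) = fun p => p.1 * g p + (p.1 + p.2) * del1 g p := by
  funext p
  simp only [del1]
  rw [fderiv_fun_mul (differentiableAt_fst.fun_add differentiableAt_snd) (hg p)]
  simp [fderiv_coordsum]
  ring

lemma del2_coordmul {g : ℂ × ℂ → ℂ} (hg : Differentiable ℂ g) :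
    del2 (fun p => (p.1 + p.2) * g p) = fun p => p.2 * g p + (p.1 + p.2) * del2 g p := by
  funext p
  simp only [del2]
  rw [fderiv_fun_mul (differentiableAt_fst.fun_add differentiableAt_snd) (hg p)]
  simp [fderiv_coordsum]
  ring

lemma del_comm {f : ℂ × ℂ → ℂ} (hf : ContDiff ℂ ⊤ f) : del1 (del2 f) = del2 (del1 f) := by
  funext p
  have hd : Differentiable ℂ (fun q => fderiv ℂ f q) :=
    (hf.fderiv_right (m := 1) le_top).differentiable one_ne_zero
  have hsym := ((hf.contDiffAt (x := p)).isSymmSndFDerivAt le_top).eq (1,0) (0,1)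
  simp only [del1, del2]
  rw [show del2 f = fun q => q.2 * (fderiv ℂ f q) (0,1) from rfl,
      show del1 f = fun q => q.1 * (fderiv ℂ f q) (1,0) from rfl,
      fderiv_fun_mul differentiableAt_snd ((hd p).clm_apply (differentiableAt_const _)),
      fderiv_fun_mul differentiableAt_fst ((hd p).clm_apply (differentiableAt_const _)),
      fderiv_clm_apply (hd p) (differentiableAt_const _),
      fderiv_clm_apply (hd p) (differentiableAt_const _)]
  simp [fderiv_snd, fderiv_fst, hsym]
  ring

lemma del1_Lop {g : ℂ × ℂ → ℂ} (hg : ContDiff ℂ ⊤ g) (c : ℂ) :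
    del1 (Lop c g) = fun p => del1 (del1 g) p + del1 (del2 g) p + c * del1 g p := by
  have h1 := (contDiff_del1 hg).differentiable (by simp)
  have h2 := (contDiff_del2 hg).differentiable (by simp)
  have hgd := hg.differentiable (by simp)
  rw [show Lop c g = fun p => (del1 g p + del2 g p) + c * g p from rfl,
      del1_add (h1.fun_add h2) (hgd.const_mul c), del1_add h1 h2, del1_cmul hgd c]

lemma del2_Lop {g : ℂ × ℂ → ℂ} (hg : ContDiff ℂ ⊤ g) (c : ℂ) :
    del2 (Lop c g) = fun p => del2 (del1 g) p + del2 (del2 g) p + c * del2 g p := by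
  have h1 := (contDiff_del1 hg).differentiable (by simp)
  have h2 := (contDiff_del2 hg).differentiable (by simp)
  have hgd := hg.differentiable (by simp)
  rw [show Lop c g = fun p => (del1 g p + del2 g p) + c * g p from rfl,
      del2_add (h1.fun_add h2) (hgd.const_mul c), del2_add h1 h2, del2_cmul hgd c]

lemma Lop_comm {g : ℂ × ℂ → ℂ} (hg : ContDiff ℂ ⊤ g) (a b : ℂ) :
    Lop a (Lop b g) = Lop b (Lop a g) := by
  funext p
  simp only [Lop_apply a (Lop b g), Lop_apply b (Lop a g), del1_Lop hg, del2_Lop hg,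
    Lop_apply a g, Lop_apply b g]
  ring

/-- `(δ1+δ2)(P2 f) = δ1³f + δ2³f + (z1+z2) (δ1+δ2+1/3)(δ1+δ2+2/3)(δ1+δ2+1) f`. -/
lemma T_P2 {f : ℂ × ℂ → ℂ} (hf : ContDiff ℂ ⊤ f) (p : ℂ × ℂ) :
    del1 (P2op f) p + del2 (P2op f) p =
      del1 (del1 (del1 f)) p + del2 (del2 (del2 f)) p +
        (p.1 + p.2) * Lop (1/3) (Lop (2/3) (Lop 1 f)) p := by
  have h1 := contDiff_del1 hf
  have h2 := contDiff_del2 hf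
  have h11 := contDiff_del1 h1
  have h12 := contDiff_del1 h2
  have h22 := contDiff_del2 h2
  have hQ : ContDiff ℂ ⊤ (Lop (1/3) (Lop (2/3) f)) := contDiff_Lop _ (contDiff_Lop _ hf)
  have d11 := h11.differentiable (by simp)
  have d12 := h12.differentiable (by simp)
  have d22 := h22.differentiable (by simp)
  have dQ := hQ.differentiable (by simp)
  have dA : Differentiable ℂ (fun q => del1 (del1 f) q - del1 (del2 f) q + del2 (del2 f) q) :=
    (d11.sub d12).add d22
  have dB : Differentiable ℂ (fun q => (q.1 + q.2) * Lop (1/3) (Lop (2/3) f) q) :=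
    (differentiable_fst.add differentiable_snd).mul dQ
  have hP2 : P2op f = fun q => (del1 (del1 f) q - del1 (del2 f) q + del2 (del2 f) q)
      + (q.1 + q.2) * Lop (1/3) (Lop (2/3) f) q := rfl
  -- commutation facts
  have c0 : del1 (del2 f) = del2 (del1 f) := del_comm hf
  have c1 : del1 (del2 (del1 f)) = del2 (del1 (del1 f)) := del_comm h1
  have c2 : del1 (del2 (del2 f)) = del2 (del1 (del2 f)) := del_comm h2
  -- `Lop 1` commutes past `Q`
  have hComm : Lop 1 (Lop (1/3) (Lop (2/3) f)) = Lop (1/3) (Lop (2/3) (Lop 1 f)) := by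
    rw [Lop_comm (contDiff_Lop _ hf) 1 (1/3)]
    exact congrArg (Lop (1/3)) (Lop_comm hf 1 (2/3))
  rw [hP2, del1_add dA dB, del2_add dA dB, del1_add (d11.fun_sub d12) d22,
      del2_add (d11.fun_sub d12) d22, del1_sub d11 d12, del2_sub d11 d12,
      del1_coordmul dQ, del2_coordmul dQ, ← hComm]
  simp only [Lop_apply 1 (Lop (1/3) (Lop (2/3) f))]
  rw [show del1 (del1 (del2 f)) = del2 (del1 (del1 f)) from (congrArg del1 c0).trans c1, c2]
  ring

theorem V229_PicardFuchs_Z2_equivariant (f : ℂ × ℂ → ℂ) (hf : ContDiff ℂ ⊤ f) :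
    swapOp (P2op (swapOp f)) = P2op f ∧
    swapOp (P1op (swapOp f)) =
      fun p => del1 (P2op f) p + del2 (P2op f) p - P1op f p := by
  have c0 : del1 (del2 f) = del2 (del1 f) := del_comm hf
  constructor
  · funext p
    have e1 : del1 (del1 (swapOp f)) = swapOp (del2 (del2 f)) := by
      rw [del1_swap, del1_swap]
    have e2 : del1 (del2 (swapOp f)) = swapOp (del2 (del1 f)) := by
      rw [del2_swap, del1_swap]
    have e3 : del2 (del2 (swapOp f)) = swapOp (del1 (del1 f)) := by
      rw [del2_swap, del2_swap]
    have e4 : Lop (1/3) (Lop (2/3) (swapOp f)) = swapOp (Lop (1/3) (Lop (2/3) f)) := by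
      rw [Lop_swap, Lop_swap]
    show P2op (swapOp f) (p.2, p.1) = P2op f p
    simp only [P2op, e1, e2, e3, e4, swapOp, c0]
    ring
  · funext p
    have e1 : del1 (del1 (del1 (swapOp f))) = swapOp (del2 (del2 (del2 f))) := by
      rw [del1_swap, del1_swap, del1_swap]
    have e4 : Lop (1/3) (Lop (2/3) (Lop 1 (swapOp f)))
        = swapOp (Lop (1/3) (Lop (2/3) (Lop 1 f))) := by
      rw [Lop_swap, Lop_swap, Lop_swap]
    rw [T_P2 hf p]
    show P1op (swapOp f) (p.2, p.1) = _
    simp only [P1op, e1, e4, swapOp]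
    ring
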